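/- Let A ⊆ ℝ² be a symmetric set with 0, a, b ∈ A, and let z ∈ 2ℤa + 2ℤb. Then the loops σ_z⁺ := (z, z+2a, z+2a+2b, z+2b, z) and σ_z⁻ := (z, z−2a, z−2a−2b, z−2b, z) are checkers sequences in A. -/

import Mathlib

noncomputable section

/-- The first Heisenberg group `ℍ`, as `ℝ³` with coordinates `(x, y, t)`. -/
structure Heis where
  x : ℝ
  y : ℝ
  t : ℝ

namespace Heis

/-- The Heisenberg group law `(x,y,t)·(x',y',t') = (x+x', y+y', t+t'+(xy'−yx')/2)`. -/
def mul (p q : Heis) : Heis :=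
  ⟨p.x + q.x, p.y + q.y, p.t + q.t + (p.x * q.y - p.y * q.x) / 2⟩

/-- The group inverse. -/
def inv (p : Heis) : Heis := ⟨-p.x, -p.y, -p.t⟩

/-- The map `p̄ = (−x,−y,t)`. -/
def bar (p : Heis) : Heis := ⟨-p.x, -p.y, p.t⟩

/-- The Korányi norm `‖(x,y,t)‖ = ((x²+y²)² + 16t²)^{1/4}`. -/
def knorm (p : Heis) : ℝ := ((p.x ^ 2 + p.y ^ 2) ^ 2 + 16 * p.t ^ 2) ^ ((1 : ℝ) / 4)

/-- The Korányi distance `d(p,q) = ‖q⁻¹·p‖`. -/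
def kdist (p q : Heis) : ℝ := knorm (mul (inv q) p)

/-- The projection `π : ℍ → ℝ²`, `π(x,y,t) = (x,y)`. -/
def pi (p : Heis) : ℝ × ℝ := (p.x, p.y)

/-- The embedding of `ℝ²` into `ℍ`, `z ↦ (z, 0)`. -/
def emb (z : ℝ × ℝ) : Heis := ⟨z.1, z.2, 0⟩

end Heis

/-- The Euclidean point reflection `S_x(y) = 2x − y` in `ℝ²`. -/
def S (a b : ℝ × ℝ) : ℝ × ℝ := 2 • a - b

/-- The symmetric point of `q` relative to `p`: `Σ_p(q) := q · (S_{π(p)}(π(q)) − π(q), 0)`. -/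
def symPt (p q : Heis) : Heis :=
  Heis.mul q (Heis.emb (S (Heis.pi p) (Heis.pi q) - Heis.pi q))

/-- A set `E ⊆ ℍ` is symmetric if `Σ_p(q) ∈ E` for all `p, q ∈ E`. -/
def SymSetH (E : Set Heis) : Prop := ∀ p ∈ E, ∀ q ∈ E, symPt p q ∈ E

/-- A set `A ⊆ ℝ²` is symmetric if `S_x(y) = 2x − y ∈ A` for all `x, y ∈ A`. -/
def SymSetR2 (A : Set (ℝ × ℝ)) : Prop := ∀ x ∈ A, ∀ y ∈ A, S x y ∈ A

/-- The `p`-lift of a planar point `w` (identified with `(w,0) ∈ ℍ`):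
`(w,0)|_p = p · (w − π(p), 0)`. -/
def liftPt (p : Heis) (w : ℝ × ℝ) : Heis := Heis.mul p (Heis.emb (w - Heis.pi p))

/-- The `p`-lift of a planar sequence `(z₀, z₁, …)`: the sequence `(p₀, p₁, …)` with
`p₀ = (z₀,0)|_p` and `p_{j+1} = (z_{j+1},0)|_{p_j}`. -/
def liftSeq (p : Heis) (z : ℕ → ℝ × ℝ) : ℕ → Heis
  | 0 => liftPt p (z 0)
  | j + 1 => liftPt (liftSeq p z j) (z (j + 1))

/-- `(z₀, …, z_{n-1})` is a checkers sequence in `A ⊆ ℝ²`: each `z_j ∈ A` and each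
`z_{j+1} = S_{y_j}(z_j)` for some `y_j ∈ A`. -/
def IsCheckers (A : Set (ℝ × ℝ)) (z : ℕ → ℝ × ℝ) (n : ℕ) : Prop :=
  (∀ j < n, z j ∈ A) ∧ ∀ j : ℕ, j + 1 < n → ∃ y ∈ A, z (j + 1) = S y (z j)

/-- The loop `σ_z⁺ = (z, z+2a, z+2a+2b, z+2b, z)` (as a sequence, constant `= z` beyond
index 4). -/
def sigmaPlus (z a b : ℝ × ℝ) : ℕ → ℝ × ℝ
  | 1 => z + 2 • a
  | 2 => z + 2 • a + 2 • b
  | 3 => z + 2 • b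
  | _ => z

/-- The loop `σ_z⁻ = (z, z−2a, z−2a−2b, z−2b, z)` (as a sequence, constant `= z` beyond
index 4). -/
def sigmaMinus (z a b : ℝ × ℝ) : ℕ → ℝ × ℝ
  | 1 => z - 2 • a
  | 2 => z - 2 • a - 2 • b
  | 3 => z - 2 • b
  | _ => z

/-- Let `A ⊆ ℝ²` be symmetric with `0, a, b ∈ A`, and let
`z ∈ 2ℤa + 2ℤb`. Then the loops `σ_z⁺` and `σ_z⁻` are checkers sequences in `A`. -/
theorem loops_are_checkers (A : Set (ℝ × ℝ)) (hA : SymSetR2 A) (a b : ℝ × ℝ)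
    (h0 : (0 : ℝ × ℝ) ∈ A) (ha : a ∈ A) (hb : b ∈ A)
    (z : ℝ × ℝ) (hz : ∃ m k : ℤ, z = (2 * m) • a + (2 * k) • b) :
    IsCheckers A (sigmaPlus z a b) 5 ∧ IsCheckers A (sigmaMinus z a b) 5 := by
  obtain ⟨m, k, rfl⟩ := hz
  have hneg : ∀ w ∈ A, -w ∈ A := by
    intro w hw
    have := hA 0 h0 w hw
    simpa [S] using this
  have htr : ∀ c ∈ A, ∀ w ∈ A, w + c + c ∈ A := by
    intro c hc w hw
    have h := hA c hc (-w) (hneg w hw)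
    have h2 : S c (-w) = w + c + c := by simp only [S, two_smul, sub_neg_eq_add]; abel
    rwa [h2] at h
  have htr' : ∀ c ∈ A, ∀ w ∈ A, w - c - c ∈ A := by
    intro c hc w hw
    have h := hneg _ (htr c hc (-w) (hneg w hw))
    have h2 : -(-w + c + c) = w - c - c := by abel
    rwa [h2] at h
  have keyA : ∀ c ∈ A, ∀ (n : ℤ), ∀ w ∈ A, w + (2 * n) • c ∈ A := by
    intro c hc n
    induction n using Int.induction_on with
    | zero => intro w hw; simpa using hw
    | succ i ih =>
        intro w hw
        have h := htr c hc _ (ih w hw)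
        have he : w + (2 * ((i : ℤ) + 1)) • c = w + (2 * (i : ℤ)) • c + c + c := by module
        rwa [he]
    | pred i ih =>
        intro w hw
        have h := htr' c hc _ (ih w hw)
        have he : w + (2 * (-(i : ℤ) - 1)) • c = w + (2 * (-(i : ℤ))) • c - c - c := by
          module
        rwa [he]
  have key : ∀ w ∈ A, ∀ m' k' : ℤ, w + (2 * m') • a + (2 * k') • b ∈ A := by
    intro w hw m' k'
    exact keyA b hb k' _ (keyA a ha m' w hw)
  set Z : ℝ × ℝ := (2 * m) • a + (2 * k) • b with hZ
  have memZ : ∀ w ∈ A, ∀ m' k' : ℤ, ∀ t : ℝ × ℝ,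
      t = w + (2 * m') • a + (2 * k') • b → t ∈ A := by
    rintro w hw m' k' t rfl; exact key w hw m' k'
  constructor
  · constructor
    · intro j hj
      interval_cases j
      · exact memZ 0 h0 m k _ (by show Z = _; rw [hZ]; module)
      · exact memZ 0 h0 (m + 1) k _ (by show Z + 2 • a = _; rw [hZ]; module)
      · exact memZ 0 h0 (m + 1) (k + 1) _ (by show Z + 2 • a + 2 • b = _; rw [hZ]; module)
      · exact memZ 0 h0 m (k + 1) _ (by show Z + 2 • b = _; rw [hZ]; module)
      · exact memZ 0 h0 m k _ (by show Z = _; rw [hZ]; module)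
    · intro j hj
      have hj' : j < 4 := by omega
      interval_cases j
      · exact ⟨Z + a, memZ a ha m k _ (by rw [hZ]; module),
          by show Z + 2 • a = S (Z + a) Z; simp only [S]; module⟩
      · exact ⟨Z + 2 • a + b, memZ b hb (m + 1) k _ (by rw [hZ]; module),
          by show Z + 2 • a + 2 • b = S (Z + 2 • a + b) (Z + 2 • a); simp only [S]; module⟩
      · exact ⟨Z + a + 2 • b, memZ a ha m (k + 1) _ (by rw [hZ]; module),
          by show Z + 2 • b = S (Z + a + 2 • b) (Z + 2 • a + 2 • b); simp only [S]; module⟩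
      · exact ⟨Z + b, memZ b hb m k _ (by rw [hZ]; module),
          by show Z = S (Z + b) (Z + 2 • b); simp only [S]; module⟩
  · constructor
    · intro j hj
      interval_cases j
      · exact memZ 0 h0 m k _ (by show Z = _; rw [hZ]; module)
      · exact memZ 0 h0 (m - 1) k _ (by show Z - 2 • a = _; rw [hZ]; module)
      · exact memZ 0 h0 (m - 1) (k - 1) _ (by show Z - 2 • a - 2 • b = _; rw [hZ]; module)
      · exact memZ 0 h0 m (k - 1) _ (by show Z - 2 • b = _; rw [hZ]; module)
      · exact memZ 0 h0 m k _ (by show Z = _; rw [hZ]; module)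
    · intro j hj
      have hj' : j < 4 := by omega
      interval_cases j
      · exact ⟨Z - a, memZ (-a) (hneg a ha) m k _ (by rw [hZ]; module),
          by show Z - 2 • a = S (Z - a) Z; simp only [S]; module⟩
      · exact ⟨Z - 2 • a - b, memZ (-b) (hneg b hb) (m - 1) k _ (by rw [hZ]; module),
          by show Z - 2 • a - 2 • b = S (Z - 2 • a - b) (Z - 2 • a); simp only [S]; module⟩
      · exact ⟨Z - a - 2 • b, memZ (-a) (hneg a ha) m (k - 1) _ (by rw [hZ]; module),
          by show Z - 2 • b = S (Z - a - 2 • b) (Z - 2 • a - 2 • b); simp only [S]; module⟩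
      · exact ⟨Z - b, memZ (-b) (hneg b hb) m k _ (by rw [hZ]; module),
          by show Z = S (Z - b) (Z - 2 • b); simp only [S]; module⟩
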